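/- Let L be an even lattice, a ∈ L with (a,a) = -2, and z ∈ L isotropic with (a,z)=0. Then t(z,a) = R_a ∘ R_{a - z}, where R_v(x) = x - 2((v,x)/(v,v))v denotes the reflection in a vector v of square -2. -/
import Mathlib


variable {M : Type*} [AddCommGroup M] [Module ℤ M]

/-- The transvection `t(z,a)(x) = x - (a,x)z + (z,x)a - (1/2)(a,a)(z,x)z`. -/
def transv (B : M →ₗ[ℤ] M →ₗ[ℤ] ℤ) (z a x : M) : M :=
  x - B a x • z + B z x • a - (B a a / 2 * B z x) • z

/-- The reflection `R_v(x) = x + (v,x)v` in a vector of square `-2`. -/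
def reflNegTwo (B : M →ₗ[ℤ] M →ₗ[ℤ] ℤ) (v x : M) : M :=
  x + B v x • v

theorem transv_eq_refl_comp_refl [Module.Free ℤ M] [Module.Finite ℤ M]
    (B : M →ₗ[ℤ] M →ₗ[ℤ] ℤ)
    (hsymm : ∀ x y, B x y = B y x)
    (hnd : ∀ x, (∀ y, B x y = 0) → x = 0)
    (heven : ∀ x, 2 ∣ B x x)
    (z a : M) (hz : B z z = 0) (haz : B a z = 0) (ha : B a a = -2) :
    ∀ x, transv B z a x = reflNegTwo B a (reflNegTwo B (a - z) x) := by
  intro x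
  have hza : B z a = 0 := (hsymm z a).trans haz
  simp only [transv, reflNegTwo, map_sub, map_add, map_zsmul, LinearMap.sub_apply,
    LinearMap.add_apply, smul_eq_mul, ha, haz, hz, hza]
  rw [show (-2 : ℤ) / 2 * B z x = -(B z x) from by ring,
    show B a x + (B a x - B z x) * (-2 - 0) = 2 * B z x - B a x from by ring,
    neg_zsmul, zsmul_sub, sub_zsmul, sub_zsmul, sub_zsmul, mul_zsmul]
  abel
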